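/- Suppose a sequence of accepted requests indexed by i satisfies v_i ≥ r_i·Σ_{e∈P_i} λ_e^{(i−1)} and v_i ≥ r_i·d_i where d_i = |P_i|, and edge prices update as λ_e^{(i)} = exp(γ·ω_e^{(i)}/C_e) − 1 with ω_e^{(i)} = ω_e^{(i−1)} + r_i for e ∈ P_i. If additionally r_i ≤ C_e/γ for all edges e, then the total value Σ_i v_i is at least (Σ_e C_e·λ_e^{(N)}) / (2γ(e − 1)). -/

import Mathlib

open Real

lemma exp_sub_one_le_aux (t : ℝ) (ht0 : 0 ≤ t) (ht1 : t ≤ 1) :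
    Real.exp t - 1 ≤ (Real.exp 1 - 1) * t := by
  have h := convexOn_exp.2 (Set.mem_univ (0:ℝ)) (Set.mem_univ (1:ℝ))
    (by linarith : (0:ℝ) ≤ 1 - t) ht0 (by ring)
  simp only [smul_eq_mul, mul_zero, mul_one, zero_add, Real.exp_zero] at h
  nlinarith

/-- Lemma 3 (algorithm lower bound): total accepted value is at least the final
total edge prices weighted by capacities, divided by `2γ(e-1)`. -/
theorem stmt_11 {E : Type*} [Fintype E] [DecidableEq E] (N : ℕ) (γ : ℝ) (hγ : 0 < γ)
    (C : E → ℝ) (hC : ∀ e, 0 < C e)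
    (r : Fin N → ℝ) (hr : ∀ i, 0 < r i)
    (P : Fin N → Finset E) (v : Fin N → ℝ)
    (ω : ℕ → E → ℝ)
    (hω0 : ∀ e, ω 0 e = 0)
    (hωs : ∀ (i : Fin N) (e : E),
      ω ((i : ℕ) + 1) e = ω i e + (if e ∈ P i then r i else 0))
    (lam : ℕ → E → ℝ)
    (hlam : ∀ (n : ℕ) (e : E), lam n e = Real.exp (γ * ω n e / C e) - 1)
    (hv1 : ∀ i : Fin N, v i ≥ r i * ∑ e ∈ P i, lam i e)
    (hv2 : ∀ i : Fin N, v i ≥ r i * ((P i).card : ℝ))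
    (hrsmall : ∀ (i : Fin N) (e : E), r i ≤ C e / γ) :
    ∑ i, v i ≥ (∑ e, C e * lam N e) / (2 * γ * (Real.exp 1 - 1)) := by
  have hE1 : (0:ℝ) < Real.exp 1 - 1 := by
    have := Real.add_one_lt_exp (one_ne_zero (α := ℝ))
    linarith
  set c : ℝ := γ * (Real.exp 1 - 1) with hc
  have hcpos : 0 < c := mul_pos hγ hE1
  have step : ∀ (i : Fin N) (e : E),
      C e * (lam ((i:ℕ)+1) e - lam i e) ≤
        (if e ∈ P i then c * r i * (lam i e + 1) else 0) := by
    intro i e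
    have hCe := hC e
    by_cases he : e ∈ P i
    · simp only [he, if_true]
      rw [hlam, hlam, hωs i e, if_pos he]
      have hx0 : 0 ≤ γ * r i / C e :=
        div_nonneg (mul_nonneg hγ.le (hr i).le) hCe.le
      have hx1 : γ * r i / C e ≤ 1 := by
        rw [div_le_one hCe]
        have h := hrsmall i e
        calc γ * r i ≤ γ * (C e / γ) := by nlinarith
          _ = C e := by field_simp
      have hk := exp_sub_one_le_aux _ hx0 hx1
      have expand : γ * (ω i e + r i) / C e = γ * ω (i:ℕ) e / C e + γ * r i / C e := by
        ring
      rw [expand, Real.exp_add]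
      set A := γ * ω (i:ℕ) e / C e
      set B := γ * r i / C e with hB
      have hCB : C e * B = γ * r i := by rw [hB]; field_simp
      have hA : 0 < Real.exp A := Real.exp_pos A
      have h3 := mul_le_mul_of_nonneg_left hk
        (show 0 ≤ C e * Real.exp A by positivity)
      have h4 : C e * Real.exp A * ((Real.exp 1 - 1) * B) = c * r i * Real.exp A := by
        calc C e * Real.exp A * ((Real.exp 1 - 1) * B)
            = (Real.exp 1 - 1) * Real.exp A * (C e * B) := by ring
          _ = c * r i * Real.exp A := by rw [hCB, hc]; ring
      nlinarith [h3, h4]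
    · simp only [he, if_false]
      rw [hlam, hlam, hωs i e, if_neg he]
      simp
  have lam0 : ∀ e, lam 0 e = 0 := by
    intro e; rw [hlam, hω0]; simp
  have tele : ∀ e, C e * lam N e
      = ∑ i ∈ Finset.range N, C e * (lam (i+1) e - lam i e) := by
    intro e
    rw [← Finset.mul_sum, Finset.sum_range_sub (fun n => lam n e), lam0]
    ring
  have main : ∑ e, C e * lam N e ≤ 2 * γ * (Real.exp 1 - 1) * ∑ i, v i := by
    calc ∑ e, C e * lam N e
        = ∑ e, ∑ i ∈ Finset.range N, C e * (lam (i+1) e - lam i e) := by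
          exact Finset.sum_congr rfl fun e _ => tele e
      _ = ∑ i ∈ Finset.range N, ∑ e, C e * (lam (i+1) e - lam i e) := Finset.sum_comm
      _ = ∑ i : Fin N, ∑ e, C e * (lam ((i:ℕ)+1) e - lam i e) :=
          (Fin.sum_univ_eq_sum_range (fun i => ∑ e, C e * (lam (i+1) e - lam i e)) N).symm
      _ ≤ ∑ i : Fin N, ∑ e, (if e ∈ P i then c * r i * (lam i e + 1) else 0) :=
          Finset.sum_le_sum fun i _ => Finset.sum_le_sum fun e _ => step i e
      _ ≤ ∑ i : Fin N, c * (2 * v i) := by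
          apply Finset.sum_le_sum
          intro i _
          have hsum : ∑ e, (if e ∈ P i then c * r i * (lam i e + 1) else 0)
              = c * (r i * (∑ e ∈ P i, lam i e) + r i * (P i).card) := by
            rw [Finset.sum_ite_mem, Finset.univ_inter]
            have hre : ∀ e ∈ P i, c * r i * (lam (i:ℕ) e + 1)
                = c * r i * lam (i:ℕ) e + c * r i := fun e _ => by ring
            rw [Finset.sum_congr rfl hre, Finset.sum_add_distrib, Finset.sum_const,
              ← Finset.mul_sum, nsmul_eq_mul]
            ring
          rw [hsum]
          have h1 := hv1 i
          have h2 := hv2 i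
          nlinarith
      _ = 2 * γ * (Real.exp 1 - 1) * ∑ i, v i := by
          simp_rw [show ∀ i : Fin N, c * (2 * v i) = (2 * c) * v i from fun i => by ring]
          rw [← Finset.mul_sum, hc]; ring
  rw [ge_iff_le, div_le_iff₀ (by positivity : (0:ℝ) < 2 * γ * (Real.exp 1 - 1))]
  nlinarith [main]
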